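/- arXiv:1402.6896 — 2 statements merged into one kernel-verified Lean document; each statement's English description precedes it below -/
import Mathlib

section
/- Let G be a Herglotz vector field in the class ℳₙ. Then there exists a set E_G ⊆ [0,∞) of Lebesgue measure zero such that for every t ∈ (0,∞)∖E_G the convergence (1/ε)∫_{t−ε}^{t} G(z,τ)dτ → G(z,t) as ε → 0⁺ holds locally uniformly with respect to z ∈ 𝔹ⁿ. -/
open Metric MeasureTheory Filter Topology Set

set_option maxHeartbeats 1600000

noncomputable section

/-- `ℂⁿ` with the Euclidean norm. -/
abbrev En (n : ℕ) := EuclideanSpace ℂ (Fin n)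

/-- The open unit ball `𝔹ⁿ ⊆ ℂⁿ`. -/
def 𝔹 (n : ℕ) : Set (En n) := Metric.ball 0 1

/-- Holomorphic maps `𝔹ⁿ → ℂⁿ` (represented by global functions, holomorphic on the ball). -/
def Hol (n : ℕ) : Set (En n → En n) := {f | DifferentiableOn ℂ f (𝔹 n)}

/-- The class `ℳₙ`: holomorphic `h` with `h 0 = 0`, `dh₀ = -id` and `Re ⟪h z, z⟫ ≤ 0` on `𝔹ⁿ`. -/
def ClassM (n : ℕ) : Set (En n → En n) :=
  {h | DifferentiableOn ℂ h (𝔹 n) ∧ h 0 = 0 ∧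
    fderiv ℂ h 0 = -(1 : En n →L[ℂ] En n) ∧
    ∀ z ∈ 𝔹 n, (inner ℂ (h z) z : ℂ).re ≤ 0}

/-- Herglotz vector field in the class `ℳₙ`. -/
def IsHerglotz (n : ℕ) (G : ℝ → En n → En n) : Prop :=
  (∀ z ∈ 𝔹 n, StronglyMeasurable fun t : ℝ => G t z) ∧
  (∀ᵐ t ∂(volume.restrict (Ici (0 : ℝ))), G t ∈ ClassM n)

/-- The evolution family `φ_{s,t}` generated by `G` (integral form of the Loewner ODE,
equivalent to local absolute continuity plus the ODE a.e.). -/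
def IsEvolution (n : ℕ) (G : ℝ → En n → En n) (φ : ℝ → ℝ → En n → En n) : Prop :=
  ∀ s : ℝ, 0 ≤ s →
    (∀ t : ℝ, s ≤ t → DifferentiableOn ℂ (φ s t) (𝔹 n)) ∧
    ∀ z ∈ 𝔹 n,
      (∀ t : ℝ, s ≤ t → φ s t z ∈ 𝔹 n) ∧
      (∀ t : ℝ, s ≤ t → φ s t z = z + ∫ τ in s..t, G τ (φ s τ z))

/-- `f = lim_{t→∞} eᵗ φ_{s,t}` locally uniformly on the ball. -/
def IsLoewnerLimit (n : ℕ) (φ : ℝ → ℝ → En n → En n) (s : ℝ) (f : En n → En n) : Prop :=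
  TendstoLocallyUniformlyOn (fun t : ℝ => fun z => Real.exp t • φ s t z) f atTop (𝔹 n)

/-- The class `𝒮ₙ⁰` of maps with parametric representation. -/
def S0 (n : ℕ) : Set (En n → En n) :=
  {f | ∃ G φ, IsHerglotz n G ∧ IsEvolution n G φ ∧ IsLoewnerLimit n φ 0 f}

/-- `T` is a regular point of `G`: the backward averages of `G(·,τ)` converge to `G(·,T)`
locally uniformly on the ball. -/
def RegularPoint (n : ℕ) (G : ℝ → En n → En n) (T : ℝ) : Prop :=
  0 < T ∧ TendstoLocallyUniformlyOn
    (fun ε : ℝ => fun z => (ε⁻¹ : ℝ) • ∫ τ in T - ε..T, G τ z)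
    (fun z => G T z) (𝓝[>] (0 : ℝ)) (𝔹 n)

/-- The needle variation of `G` with data `(T, h)` and width `ε`. -/
def needle {n : ℕ} (G : ℝ → En n → En n) (T ε : ℝ) (h : En n → En n) :
    ℝ → En n → En n :=
  fun t => if t ∈ Ioo (T - ε) T then h else G t

/-- A (sequentially) open subset of `Hol(𝔹ⁿ,ℂⁿ)` for the topology of locally uniform
convergence. -/
def SeqOpenIn (n : ℕ) (V : Set (En n → En n)) : Prop :=
  V ⊆ Hol n ∧ ∀ f ∈ V, ∀ u : ℕ → En n → En n, (∀ k, u k ∈ Hol n) →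
    TendstoLocallyUniformlyOn u f atTop (𝔹 n) → ∀ᶠ k in atTop, u k ∈ V

/-- Directional derivative of a functional `Φ` at `f` along `h`. -/
def HasDirDeriv (n : ℕ) (Φ : (En n → En n) → ℂ) (f h : En n → En n) (c : ℂ) : Prop :=
  Tendsto (fun δ : ℂ => (Φ (f + δ • h) - Φ f) / δ) (𝓝[≠] (0 : ℂ)) (𝓝 c)

/-- `Φ` is complex differentiable at `F` with complex derivative `L`, in Hamilton's sense. -/
def HamiltonDiffAt (n : ℕ) (Φ : (En n → En n) → ℂ) (F : En n → En n)
    (L : (En n → En n) → ℂ) : Prop :=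
  ∃ (V : Set (En n → En n)) (Λ : (En n → En n) → (En n → En n) → ℂ),
    F ∈ V ∧ SeqOpenIn n V ∧
    (∀ f ∈ V, ∀ h ∈ Hol n, HasDirDeriv n Φ f h (Λ f h)) ∧
    (∀ f ∈ V, ∀ h ∈ Hol n, ∀ fk hk : ℕ → En n → En n,
      (∀ k, fk k ∈ V) → (∀ k, hk k ∈ Hol n) →
      TendstoLocallyUniformlyOn fk f atTop (𝔹 n) →
      TendstoLocallyUniformlyOn hk h atTop (𝔹 n) →
      Tendsto (fun k => Λ (fk k) (hk k)) atTop (𝓝 (Λ f h))) ∧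
    L = Λ F

/-- A continuous linear functional on `Hol(𝔹ⁿ,ℂⁿ)`. -/
def ContLinFunctional (n : ℕ) (L : (En n → En n) → ℂ) : Prop :=
  (∀ f ∈ Hol n, ∀ g ∈ Hol n, L (f + g) = L f + L g) ∧
  (∀ (c : ℂ), ∀ f ∈ Hol n, L (c • f) = c * L f) ∧
  (∀ (fk : ℕ → En n → En n), ∀ f ∈ Hol n, (∀ k, fk k ∈ Hol n) →
    TendstoLocallyUniformlyOn fk f atTop (𝔹 n) →
    Tendsto (fun k => L (fk k)) atTop (𝓝 (L f)))

/-- Support point of a class `A ⊆ Hol(𝔹ⁿ,ℂⁿ)`. -/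
def IsSupportPoint (n : ℕ) (A : Set (En n → En n)) (g : En n → En n) : Prop :=
  g ∈ A ∧ ∃ L : (En n → En n) → ℂ, ContLinFunctional n L ∧
    (∃ f₁ ∈ A, ∃ f₂ ∈ A, L f₁ ≠ L f₂) ∧
    ∀ h ∈ A, (L h).re ≤ (L g).re

/-- Polynomial maps `ℂⁿ → ℂⁿ`. -/
def IsPolyMap (n : ℕ) (P : En n → En n) : Prop :=
  ∀ i : Fin n, ∃ p : MvPolynomial (Fin n) ℂ,
    ∀ z : En n, P z i = MvPolynomial.eval (fun j => z j) p

/-- The Runge property of the domains `φ_{0,t}(𝔹ⁿ)` (Arosio–Bracci–Wold). -/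
def RungeProp (n : ℕ) (φ : ℝ → ℝ → En n → En n) : Prop :=
  ∀ t : ℝ, 0 ≤ t → ∀ g : En n → En n, DifferentiableOn ℂ g (𝔹 n) → g 0 = 0 →
    fderiv ℂ g 0 = 0 →
    ∃ P : ℕ → En n → En n,
      (∀ k, IsPolyMap n (P k) ∧ P k 0 = 0 ∧ fderiv ℂ (P k) 0 = 0) ∧
      TendstoLocallyUniformlyOn (fun k z => P k (φ 0 t z)) g atTop (𝔹 n)
lemma caratheodory_bound {p : ℂ → ℂ} (hp : DifferentiableOn ℂ p (ball 0 1))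
    (hre : ∀ ζ ∈ ball (0:ℂ) 1, 0 ≤ (p ζ).re) (hp0 : p 0 = 1) {ζ : ℂ}
    (hζ : ζ ∈ ball (0:ℂ) 1) : ‖p ζ‖ ≤ (1 + ‖ζ‖) / (1 - ‖ζ‖) := by
  have hζ1 : ‖ζ‖ < 1 := by simpa [mem_ball, dist_eq_norm] using hζ
  have key : ∀ ε : ℝ, 0 < ε → ‖p ζ - 1‖ ≤ ‖ζ‖ * (‖p ζ + 1‖ + 2 * ε) := by
    intro ε hε
    set c : ℂ := 1 + 2 * (ε : ℂ) with hc
    have hcre : c.re = 1 + 2 * ε := by simp [hc]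
    have hden : ∀ w ∈ ball (0:ℂ) 1, p w + c ≠ 0 := by
      intro w hw h0
      have := congrArg Complex.re h0
      simp only [Complex.add_re, hcre, Complex.zero_re] at this
      have := hre w hw
      linarith
    set φ : ℂ → ℂ := fun w => (p w - 1) / (p w + c) with hφ
    have hφd : DifferentiableOn ℂ φ (ball 0 1) :=
      (hp.sub_const 1).div (hp.add_const c) hden
    have hmaps : MapsTo φ (ball (0:ℂ) 1) (ball (0:ℂ) 1) := by
      intro w hw
      have h1 : Complex.normSq (p w - 1) < Complex.normSq (p w + c) := by
        have hrew := hre w hw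
        simp only [Complex.normSq_apply, Complex.sub_re, Complex.sub_im, Complex.add_re,
          Complex.add_im, Complex.one_re, Complex.one_im, hcre]
        have : c.im = 0 := by simp [hc]
        rw [this]
        nlinarith [hε, hrew]
      have h2 : ‖p w - 1‖ < ‖p w + c‖ := by
        have := Real.sqrt_lt_sqrt (Complex.normSq_nonneg _) h1
        simpa [Complex.norm_def] using this
      rw [mem_ball_zero_iff, hφ]
      rw [norm_div, div_lt_one (lt_of_le_of_lt (norm_nonneg _) h2)]
      exact h2
    have hφ0 : φ 0 = 0 := by simp [hφ, hp0]
    have hs := Complex.norm_le_norm_of_mapsTo_ball hφd (hmaps.mono_right ball_subset_closedBall) hφ0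
      (by simpa using hζ1)
    have hmul : ‖p ζ - 1‖ = ‖φ ζ‖ * ‖p ζ + c‖ := by
      rw [← norm_mul, div_mul_cancel₀ _ (hden ζ hζ)]
    have hcn : ‖p ζ + c‖ ≤ ‖p ζ + 1‖ + 2 * ε := by
      have : p ζ + c = (p ζ + 1) + 2 * (ε:ℂ) := by rw [hc]; ring
      rw [this]
      refine (norm_add_le _ _).trans ?_
      have : ‖(2 : ℂ) * (ε:ℂ)‖ = 2 * ε := by
        simp [norm_mul, Complex.norm_real, abs_of_pos hε]
      simp [this, abs_of_pos hε]
    calc ‖p ζ - 1‖ = ‖φ ζ‖ * ‖p ζ + c‖ := hmul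
      _ ≤ ‖ζ‖ * (‖p ζ + 1‖ + 2 * ε) := by
          apply mul_le_mul _ hcn (norm_nonneg _) (norm_nonneg _)
          simpa using hs
  have h1 : ‖p ζ - 1‖ ≤ ‖ζ‖ * ‖p ζ + 1‖ := by
    rcases eq_or_ne ζ 0 with rfl | hζ0
    · simp [hp0]
    · refine le_of_forall_pos_le_add fun ε hε => ?_
      have hζpos : 0 < ‖ζ‖ := norm_pos_iff.2 hζ0
      have := key (ε / (2 * ‖ζ‖)) (by positivity)
      calc ‖p ζ - 1‖ ≤ ‖ζ‖ * (‖p ζ + 1‖ + 2 * (ε / (2 * ‖ζ‖))) := this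
        _ = ‖ζ‖ * ‖p ζ + 1‖ + ε := by
              rw [mul_add]
              congr 1
              have hne : ‖ζ‖ * 2 ≠ 0 := by positivity
              calc ‖ζ‖ * (2 * (ε / (2 * ‖ζ‖)))
                  = ε / (‖ζ‖ * 2) * (‖ζ‖ * 2) := by ring_nf
                _ = ε := div_mul_cancel₀ ε hne
  have h2 : ‖p ζ‖ - 1 ≤ ‖p ζ - 1‖ := by
    have := norm_sub_norm_le (p ζ) 1
    simpa using this
  have h3 : ‖p ζ + 1‖ ≤ ‖p ζ‖ + 1 := by simpa using norm_add_le (p ζ) 1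
  rw [le_div_iff₀ (by linarith : (0:ℝ) < 1 - ‖ζ‖)]
  nlinarith [norm_nonneg (p ζ), norm_nonneg ζ]

lemma classM_inner_bound {n : ℕ} {h : En n → En n} (hh : h ∈ ClassM n) {z : En n}
    (hz : ‖z‖ < 1) : ‖(inner ℂ z (h z) : ℂ)‖ ≤ 2 * ‖z‖ ^ 2 / (1 - ‖z‖) := by
  obtain ⟨hdiff, h0, hder, hre⟩ := hh
  rcases eq_or_ne z 0 with rfl | hz0
  · simp [h0]
  have hzn : (0:ℝ) < ‖z‖ := norm_pos_iff.2 hz0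
  set w : En n := ‖z‖⁻¹ • z with hw
  have hwn : ‖w‖ = 1 := norm_smul_inv_norm hz0
  have hsm : ∀ ζ : ℂ, ζ ∈ ball (0:ℂ) 1 → ζ • w ∈ 𝔹 n := by
    intro ζ hζ
    rw [mem_ball_zero_iff] at hζ
    simp only [𝔹, mem_ball_zero_iff, norm_smul, hwn, mul_one]
    exact hζ
  set f : ℂ → ℂ := fun ζ => (inner ℂ w (h (ζ • w)) : ℂ) with hf
  have hfd : DifferentiableOn ℂ f (ball 0 1) := by
    have h1 : DifferentiableOn ℂ (fun ζ : ℂ => h (ζ • w)) (ball 0 1) :=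
      hdiff.comp ((ContinuousLinearMap.toSpanSingleton ℂ w).differentiable.differentiableOn)
        hsm
    exact (innerSL ℂ w).differentiable.comp_differentiableOn h1
  have hf0 : f 0 = 0 := by simp [hf, h0]
  have hderiv : HasDerivAt f (-1 : ℂ) 0 := by
    have hd1 : HasDerivAt (fun ζ : ℂ => ζ • w) w 0 := by
      simpa using (hasDerivAt_id (0:ℂ)).smul_const w
    have hball : 𝔹 n ∈ 𝓝 (0 : En n) := by
      exact isOpen_ball.mem_nhds (by simp [𝔹])
    have hd2 : HasFDerivAt h (-(1 : En n →L[ℂ] En n)) 0 := by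
      have := (hdiff.differentiableAt hball).hasFDerivAt
      rwa [hder] at this
    have hd2' : HasFDerivAt h (-(1 : En n →L[ℂ] En n)) ((0:ℂ) • w) := by simpa using hd2
    have hd3 : HasDerivAt (fun ζ : ℂ => h (ζ • w)) (-(1 : En n →L[ℂ] En n) w) 0 := by
      exact hd2'.comp_hasDerivAt (0:ℂ) hd1
    have hd4 := (innerSL ℂ w).hasFDerivAt.comp_hasDerivAt (0:ℂ) hd3
    have : (innerSL ℂ w) (-(1 : En n →L[ℂ] En n) w) = -1 := by
      simp [inner_self_eq_norm_sq_to_K, hwn]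
    rwa [this] at hd4
  set p : ℂ → ℂ := fun ζ => -(dslope f 0 ζ) with hp
  have hpd : DifferentiableOn ℂ p (ball 0 1) :=
    ((Complex.differentiableOn_dslope (ball_mem_nhds _ one_pos)).mpr hfd).neg
  have hp0 : p 0 = 1 := by
    simp [hp, dslope_same, hderiv.deriv]
  have hpre : ∀ ζ ∈ ball (0:ℂ) 1, 0 ≤ (p ζ).re := by
    intro ζ hζ
    rcases eq_or_ne ζ 0 with rfl | hζ0
    · rw [hp0]; norm_num
    have hslope : p ζ = -(ζ⁻¹ * f ζ) := by
      simp only [hp]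
      rw [dslope_of_ne _ hζ0, slope_def_field, hf0]
      simp [div_eq_inv_mul]
    have hmem := hsm ζ hζ
    have hre2 := hre (ζ • w) hmem
    -- inner (h (ζ•w)) (ζ•w) = ζ * conj (f ζ)
    have hinner : (inner ℂ (h (ζ • w)) (ζ • w) : ℂ) = ζ * (starRingEnd ℂ) (f ζ) := by
      rw [inner_smul_right, hf, ← inner_conj_symm]
    have hkey : (ζ * (starRingEnd ℂ) (f ζ)).re ≤ 0 := by rw [← hinner]; exact hre2
    have hconj : ((starRingEnd ℂ) ζ * f ζ).re ≤ 0 := by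
      have : (starRingEnd ℂ) ((starRingEnd ℂ) ζ * f ζ) = ζ * (starRingEnd ℂ) (f ζ) := by
        simp [map_mul]
      have := (Complex.conj_re ((starRingEnd ℂ) ζ * f ζ)).symm
      rw [‹(starRingEnd ℂ) ((starRingEnd ℂ) ζ * f ζ) = _›] at this
      rw [this]; exact hkey
    have hinv : ζ⁻¹ * f ζ = ((Complex.normSq ζ)⁻¹ : ℝ) * ((starRingEnd ℂ) ζ * f ζ) := by
      rw [Complex.inv_def]
      push_cast
      ring
    rw [hslope, hinv]
    simp only [Complex.neg_re, Complex.re_ofReal_mul]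
    have : (0:ℝ) ≤ (Complex.normSq ζ)⁻¹ := inv_nonneg.mpr (Complex.normSq_nonneg ζ)
    nlinarith [this, hconj]
  -- apply caratheodory
  set ζ₀ : ℂ := (‖z‖ : ℂ) with hζ₀
  have hζ₀mem : ζ₀ ∈ ball (0:ℂ) 1 := by
    rw [mem_ball_zero_iff, hζ₀]
    simpa [Complex.norm_real] using hz
  have hpb := caratheodory_bound hpd hpre hp0 hζ₀mem
  have hζ₀n : ‖ζ₀‖ = ‖z‖ := by simp [hζ₀, Complex.norm_real, abs_of_nonneg (norm_nonneg z)]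
  have hzw : ζ₀ • w = z := by
    rw [hζ₀, hw, Complex.coe_smul, smul_smul]
    rw [mul_inv_cancel₀ (norm_ne_zero_iff.mpr hz0), one_smul]
  have hζ₀ne : ζ₀ ≠ 0 := by
    simpa [hζ₀, Complex.ofReal_eq_zero] using (norm_ne_zero_iff.mpr hz0)
  have hslope₀ : p ζ₀ = -(ζ₀⁻¹ * f ζ₀) := by
    simp only [hp]
    rw [dslope_of_ne _ hζ₀ne, slope_def_field, hf0]
    simp [div_eq_inv_mul]
  have hfp : f ζ₀ = -(ζ₀ * p ζ₀) := by
    rw [hslope₀, mul_neg, ← mul_assoc, mul_inv_cancel₀ hζ₀ne, one_mul, neg_neg]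
  have hzinner : (inner ℂ z (h z) : ℂ) = ζ₀ * f ζ₀ := by
    rw [← hzw, inner_smul_left]
    simp [hf, hζ₀, Complex.conj_ofReal]
  rw [hzinner]
  rw [norm_mul, hfp, norm_neg, norm_mul, hζ₀n]
  calc ‖z‖ * (‖z‖ * ‖p ζ₀‖) ≤ ‖z‖ * (‖z‖ * ((1 + ‖z‖) / (1 - ‖z‖))) := by
        have := hpb; rw [hζ₀n] at this
        gcongr
    _ = ‖z‖ * ‖z‖ * (1 + ‖z‖) / (1 - ‖z‖) := by ring
    _ ≤ 2 * ‖z‖ ^ 2 / (1 - ‖z‖) := by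
        rw [div_le_div_iff₀ (by linarith) (by linarith)]
        nlinarith [sq_nonneg (‖z‖*(1 - ‖z‖))]

lemma classM_norm_bound {n : ℕ} {h : En n → En n} (hh : h ∈ ClassM n) {r : ℝ}
    (hr : r < 1) (hr0 : 0 ≤ r) {z : En n} (hz : ‖z‖ ≤ r) : ‖h z‖ ≤ 8 / (1 - r) ^ 2 := by
  have hd := hh.1
  rcases eq_or_ne (h z) 0 with h0 | hne
  · rw [h0, norm_zero]; positivity
  set lam : ℝ := (1 - r) / 2 with hlam
  set s : ℝ := (1 + r) / 2 with hs
  have hlam0 : 0 < lam := by rw [hlam]; linarith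
  have hs1 : s < 1 := by rw [hs]; linarith
  have hs0 : 0 ≤ s := by rw [hs]; linarith
  have hrs : r + lam = s := by rw [hlam, hs]; ring
  set M : ℝ := 2 * s ^ 2 / (1 - s) with hM
  set y : En n := ((‖h z‖⁻¹ : ℝ) : ℂ) • h z with hy
  have hyn : ‖y‖ = 1 := by
    rw [hy, norm_smul]
    simp [norm_inv, inv_mul_cancel₀ (norm_ne_zero_iff.2 hne)]
  set v : En n := ((lam : ℝ) : ℂ) • y with hv
  have hvn : ‖v‖ = lam := by
    rw [hv, norm_smul, hyn]
    simp [abs_of_pos hlam0]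
  have hmem : ∀ ζ : ℂ, ‖ζ‖ ≤ 1 → ‖z + ζ • v‖ ≤ s := by
    intro ζ hζ
    calc ‖z + ζ • v‖ ≤ ‖z‖ + ‖ζ • v‖ := norm_add_le _ _
      _ ≤ r + 1 * lam := by
          rw [norm_smul, hvn]
          gcongr
      _ = s := by rw [one_mul, hrs]
  have hmem2 : ∀ ζ : ℂ, ζ ∈ ball (0:ℂ) 2 → z + ζ • v ∈ 𝔹 n := by
    intro ζ hζ
    rw [mem_ball_zero_iff] at hζ
    rw [𝔹, mem_ball_zero_iff]
    have h21 : r + 2 * lam = 1 := by rw [hlam]; ring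
    calc ‖z + ζ • v‖ ≤ ‖z‖ + ‖ζ • v‖ := norm_add_le _ _
      _ < r + 2 * lam := by
          rw [norm_smul, hvn]
          have : ‖ζ‖ * lam < 2 * lam := by exact mul_lt_mul_of_pos_right hζ hlam0
          linarith
      _ = 1 := h21
  set g : ℂ → En n := fun ζ => h (z + ζ • v) with hg
  have hgd : DifferentiableOn ℂ g (ball 0 2) := by
    apply hd.comp
    · exact ((differentiable_const z).add
        (ContinuousLinearMap.toSpanSingleton ℂ v).differentiable).differentiableOn
    · exact hmem2
  set Φ : ℂ → ℂ := fun ζ => ζ * (inner ℂ z (g ζ) : ℂ) + ((lam:ℝ):ℂ) * (inner ℂ y (g ζ) : ℂ)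
    with hΦ
  have hΦd : DifferentiableOn ℂ Φ (ball 0 2) := by
    apply DifferentiableOn.add
    · exact differentiableOn_id.mul ((innerSL ℂ z).differentiable.comp_differentiableOn hgd)
    · exact (differentiableOn_const _).mul
        ((innerSL ℂ y).differentiable.comp_differentiableOn hgd)
  have hΦcl : DiffContOnCl ℂ Φ (ball 0 1) := by
    apply DifferentiableOn.diffContOnCl
    rw [closure_ball (0:ℂ) one_ne_zero]
    exact hΦd.mono (closedBall_subset_ball one_lt_two)
  have hfront : ∀ ζ ∈ frontier (ball (0:ℂ) 1), ‖Φ ζ‖ ≤ M := by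
    intro ζ hζ
    rw [frontier_ball (0:ℂ) one_ne_zero, mem_sphere_zero_iff_norm] at hζ
    set x : En n := z + ζ • v with hx
    have hxs : ‖x‖ ≤ s := hmem ζ (le_of_eq hζ)
    have hxb : ‖x‖ < 1 := lt_of_le_of_lt hxs hs1
    have hζζ : ζ * (starRingEnd ℂ) ζ = 1 := by
      have hn1 : Complex.normSq ζ = 1 := by
        rw [Complex.normSq_eq_norm_sq, hζ, one_pow]
      rw [Complex.mul_conj, hn1, Complex.ofReal_one]
    have e1 : (inner ℂ x (h x) : ℂ) = (inner ℂ z (h x) : ℂ)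
        + (starRingEnd ℂ) ζ * (((lam:ℝ):ℂ) * (inner ℂ y (h x) : ℂ)) := by
      rw [hx, inner_add_left, inner_smul_left, hv, inner_smul_left, Complex.conj_ofReal]
    have hid : Φ ζ = ζ * (inner ℂ x (h x) : ℂ) := by
      rw [e1, mul_add, ← mul_assoc, hζζ, one_mul]
    calc ‖Φ ζ‖ = ‖(inner ℂ x (h x) : ℂ)‖ := by rw [hid, norm_mul, hζ, one_mul]
      _ ≤ 2 * ‖x‖ ^ 2 / (1 - ‖x‖) := classM_inner_bound hh hxb
      _ ≤ M := by
          rw [hM, div_le_div_iff₀ (by linarith) (by linarith)]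
          nlinarith [norm_nonneg x, hxs, hxb, hs1, hs0,
            mul_nonneg (norm_nonneg x) hs0, mul_le_mul_of_nonneg_left hxs (norm_nonneg x)]
  have h0cl : (0:ℂ) ∈ closure (ball (0:ℂ) 1) := subset_closure (mem_ball_self one_pos)
  have hmax := Complex.norm_le_of_forall_mem_frontier_norm_le isBounded_ball hΦcl hfront h0cl
  have hinner0 : (inner ℂ y (h z) : ℂ) = ((‖h z‖ : ℝ) : ℂ) := by
    rw [hy, inner_smul_left, Complex.conj_ofReal, inner_self_eq_norm_sq_to_K]
    have hne' : ‖h z‖ ≠ 0 := norm_ne_zero_iff.2 hne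
    norm_cast
    field_simp
    have hcne : (↑‖h z‖ : ℂ) ≠ 0 := by exact_mod_cast hne'
    push_cast; field_simp; rfl
  have hΦ0 : Φ 0 = ((lam:ℝ):ℂ) * ((‖h z‖ : ℝ) : ℂ) := by
    rw [hΦ]
    simp only [hg, zero_smul, add_zero, zero_mul, zero_add]
    rw [hinner0]
  have hΦ0n : ‖Φ 0‖ = lam * ‖h z‖ := by
    rw [hΦ0, norm_mul]
    simp [Complex.norm_real, abs_of_pos hlam0, abs_of_nonneg (norm_nonneg (h z))]
  have hkey : lam * ‖h z‖ ≤ M := by rw [← hΦ0n]; exact hmax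
  have h1s : 1 - s = lam := by rw [hs, hlam]; ring
  rw [hM, h1s] at hkey
  have h2 : lam * ‖h z‖ * lam ≤ 2 * s ^ 2 := (le_div_iff₀ hlam0).1 hkey
  have hs2 : s ^ 2 ≤ 1 := by nlinarith
  have hr1 : 0 < 1 - r := by linarith
  rw [le_div_iff₀ (by positivity)]
  have h4 : (1 - r) ^ 2 = 4 * lam ^ 2 := by rw [hlam]; ring
  rw [h4]
  nlinarith [h2, hs2, norm_nonneg (h z), hlam0]

lemma classM_lipschitz {n : ℕ} {h : En n → En n} (hh : h ∈ ClassM n) {r : ℝ}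
    (hr : r < 1) (hr0 : 0 ≤ r) {a b : En n} (ha : ‖a‖ ≤ r) (hb : ‖b‖ ≤ r) :
    ‖h a - h b‖ ≤ 130 / (1 - r) ^ 3 * ‖a - b‖ := by
  set ρ : ℝ := (1 - r) / 2 with hρ
  set s : ℝ := (1 + r) / 2 with hs
  have hρ0 : 0 < ρ := by rw [hρ]; linarith
  have hs1 : s < 1 := by rw [hs]; linarith
  have hs0 : 0 ≤ s := by rw [hs]; linarith
  have hrls : r ≤ s := by rw [hs]; linarith
  have h1s : 1 - s = ρ := by rw [hs, hρ]; ring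
  have hrρs : r + ρ = s := by rw [hρ, hs]; ring
  set C : ℝ := 8 / ρ ^ 2 with hC
  have hC0 : 0 < C := by rw [hC]; positivity
  have hbound : ∀ x : En n, ‖x‖ ≤ s → ‖h x‖ ≤ C := by
    intro x hx
    have := classM_norm_bound hh hs1 hs0 hx
    rwa [h1s] at this
  have hd1 : 0 < 1 - r := by linarith
  have harith : (2 * C + 1) / ρ ≤ 130 / (1 - r) ^ 3 := by
    rw [hC, hρ]
    rw [div_le_div_iff₀ (by positivity) (by positivity)]
    have e : (2 * (8 / (((1 - r) / 2) ^ 2)) + 1) * (1 - r) ^ 3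
        = 64 * (1 - r) + (1 - r) ^ 3 := by field_simp; ring
    rw [e]
    have h4 : (1 - r) ^ 2 ≤ 1 := by nlinarith [hd1]
    have h3 : (1 - r) ^ 3 ≤ 1 - r := by nlinarith [h4, hd1]
    have : 130 * ((1 - r) / 2) = 65 * (1 - r) := by ring
    linarith
  rcases eq_or_ne a b with rfl | hab
  · simp
  have hab' : (0:ℝ) < ‖a - b‖ := by rwa [norm_pos_iff, sub_ne_zero]
  have main : ‖h a - h b‖ ≤ (2 * C + 1) / ρ * ‖a - b‖ := by
    have hCa : ‖h a‖ ≤ C := hbound a (ha.trans hrls)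
    have hCb : ‖h b‖ ≤ C := hbound b (hb.trans hrls)
    rcases le_or_gt ρ ‖a - b‖ with hfar | hclose
    · have h2 : ‖h a - h b‖ ≤ 2 * C := by
        calc ‖h a - h b‖ ≤ ‖h a‖ + ‖h b‖ := norm_sub_le _ _
          _ ≤ 2 * C := by linarith
      calc ‖h a - h b‖ ≤ 2 * C := h2
        _ = 2 * C / ρ * ρ := by field_simp
        _ ≤ (2 * C + 1) / ρ * ‖a - b‖ := by
            apply mul_le_mul _ hfar hρ0.le (by positivity)
            gcongr
            linarith
    · set u : En n := b - a with hu
      have hun : ‖u‖ = ‖a - b‖ := by rw [hu, norm_sub_rev]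
      have hu0 : 0 < ‖u‖ := by rw [hun]; exact hab'
      set ρ' : ℝ := ρ / ‖u‖ with hρ'
      have hρ'0 : 0 < ρ' := by rw [hρ']; positivity
      set F : ℂ → En n := fun ζ => h (a + ζ • u) with hF
      have hmem : ∀ ζ : ℂ, ζ ∈ ball (0:ℂ) ρ' → a + ζ • u ∈ 𝔹 n := by
        intro ζ hζ
        rw [mem_ball_zero_iff, hρ', lt_div_iff₀ hu0] at hζ
        rw [𝔹, mem_ball_zero_iff]
        calc ‖a + ζ • u‖ ≤ ‖a‖ + ‖ζ • u‖ := norm_add_le _ _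
          _ < r + ρ := by rw [norm_smul]; exact add_lt_add_of_le_of_lt ha hζ
          _ = s := hrρs
          _ < 1 := hs1
      have hmem' : ∀ ζ : ℂ, ζ ∈ ball (0:ℂ) ρ' → ‖a + ζ • u‖ ≤ s := by
        intro ζ hζ
        rw [mem_ball_zero_iff, hρ', lt_div_iff₀ hu0] at hζ
        calc ‖a + ζ • u‖ ≤ ‖a‖ + ‖ζ • u‖ := norm_add_le _ _
          _ ≤ r + ρ := by rw [norm_smul]; exact add_le_add ha hζ.le
          _ = s := hrρs
      have hFd : DifferentiableOn ℂ F (ball 0 ρ') := by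
        apply hh.1.comp
        · exact ((differentiable_const a).add
            (ContinuousLinearMap.toSpanSingleton ℂ u).differentiable).differentiableOn
        · exact hmem
      have hF0 : F 0 = h a := by rw [hF]; simp
      have hmapsF : MapsTo F (ball 0 ρ') (ball (F 0) (2 * C + 1)) := by
        intro ζ hζ
        rw [mem_ball, dist_eq_norm, hF0]
        have h1 : ‖F ζ‖ ≤ C := hbound _ (hmem' ζ hζ)
        calc ‖F ζ - h a‖ ≤ ‖F ζ‖ + ‖h a‖ := norm_sub_le _ _
          _ ≤ 2 * C := by linarith
          _ < 2 * C + 1 := by linarith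
      have h1m : (1:ℂ) ∈ ball (0:ℂ) ρ' := by
        rw [mem_ball_zero_iff, hρ', lt_div_iff₀ hu0, norm_one, one_mul, hun]
        exact hclose
      have hsch := Complex.dist_le_div_mul_dist_of_mapsTo_ball hFd (hmapsF.mono_right ball_subset_closedBall) h1m
      have hab2 : a + u = b := by rw [hu]; abel
      have hF1 : F 1 = h b := by
        rw [hF]
        simp only [one_smul]
        rw [hab2]
      rw [hF0, hF1] at hsch
      have hd10 : dist (1:ℂ) 0 = 1 := by simp
      rw [hd10, mul_one, hρ'] at hsch
      have : (2 * C + 1) / (ρ / ‖u‖) = (2 * C + 1) / ρ * ‖u‖ := by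
        field_simp
      rw [this, hun] at hsch
      calc ‖h a - h b‖ = dist (h b) (h a) := by rw [dist_eq_norm, norm_sub_rev]
        _ ≤ (2 * C + 1) / ρ * ‖a - b‖ := hsch
  calc ‖h a - h b‖ ≤ (2 * C + 1) / ρ * ‖a - b‖ := main
    _ ≤ 130 / (1 - r) ^ 3 * ‖a - b‖ := by
        exact mul_le_mul_of_nonneg_right harith (norm_nonneg _)

/-- **Lemma (Lebesgue points of a Herglotz vector field).** -/
theorem ae_regular_points {n : ℕ} (G : ℝ → En n → En n) (hG : IsHerglotz n G) :
    ∃ E : Set ℝ, E ⊆ Ici 0 ∧ volume E = 0 ∧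
      ∀ t : ℝ, 0 < t → t ∉ E →
        TendstoLocallyUniformlyOn
          (fun ε : ℝ => fun z => (ε⁻¹ : ℝ) • ∫ τ in t - ε..t, G τ z)
          (fun z => G t z) (𝓝[>] (0 : ℝ)) (𝔹 n) := by
  classical
  obtain ⟨hmeas, hae⟩ := hG
  set μr := volume.restrict (Ici (0:ℝ)) with hμr
  have hBad0 : μr {t | G t ∉ ClassM n} = 0 := ae_iff.mp hae
  set N₀ : Set ℝ := toMeasurable μr {t | G t ∉ ClassM n} ∩ Ici 0 with hN₀
  have hN₀vol : volume N₀ = 0 := by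
    have h1 : μr (toMeasurable μr {t | G t ∉ ClassM n}) = 0 := by
      rw [measure_toMeasurable]; exact hBad0
    rwa [hμr, Measure.restrict_apply (measurableSet_toMeasurable _ _)] at h1
  have hgood : ∀ t : ℝ, 0 ≤ t → t ∉ N₀ → G t ∈ ClassM n := by
    intro t ht htN
    by_contra hc
    exact htN ⟨subset_toMeasurable _ _ hc, ht⟩
  have haeN : ∀ᵐ τ : ℝ, τ ∉ N₀ := measure_eq_zero_iff_ae_notMem.mp hN₀vol
  obtain ⟨D, hDc, hDd⟩ := TopologicalSpace.exists_countable_dense (En n)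
  set F : En n → ℝ → En n := fun z τ => (Ici (0:ℝ)).indicator (fun σ => G σ z) τ with hFdef
  have hFsm : ∀ z ∈ 𝔹 n, StronglyMeasurable (F z) := fun z hz =>
    (hmeas z hz).indicator measurableSet_Ici
  have hFbd : ∀ z ∈ 𝔹 n, ∀ τ : ℝ, τ ∉ N₀ → ‖F z τ‖ ≤ 8 / (1 - ‖z‖) ^ 2 := by
    intro z hz τ hτ
    have hzn : ‖z‖ < 1 := mem_ball_zero_iff.1 hz
    by_cases hτ0 : τ ∈ Ici (0:ℝ)
    · rw [hFdef]
      simp only [indicator_of_mem hτ0]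
      exact classM_norm_bound (hgood τ hτ0 hτ) hzn (norm_nonneg z) le_rfl
    · rw [hFdef]
      simp only [indicator_of_notMem hτ0, norm_zero]
      positivity
  have hFae : ∀ z ∈ 𝔹 n, ∀ᵐ τ : ℝ, ‖F z τ‖ ≤ 8 / (1 - ‖z‖) ^ 2 := by
    intro z hz
    filter_upwards [haeN] with τ hτ using hFbd z hz τ hτ
  have hFli : ∀ z ∈ 𝔹 n, LocallyIntegrable (F z) volume := by
    intro z hz
    intro x
    refine ⟨closedBall x 1, closedBall_mem_nhds x one_pos, ?_⟩
    refine Measure.integrableOn_of_bounded (M := 8 / (1 - ‖z‖) ^ 2) (measure_closedBall_lt_top).ne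
      (hFsm z hz).aestronglyMeasurable ?_
    exact ae_restrict_of_ae (hFae z hz)
  have hδfun : Tendsto (fun ε : ℝ => ε / 2) (𝓝[>] (0:ℝ)) (𝓝[>] (0:ℝ)) := by
    apply tendsto_nhdsWithin_of_tendsto_nhds_of_eventually_within
    · have h1 : Tendsto (fun ε : ℝ => ε / 2) (𝓝 (0:ℝ)) (𝓝 ((0:ℝ) / 2)) :=
        (continuous_id.div_const 2).tendsto 0
      simpa using h1.mono_left nhdsWithin_le_nhds
    · filter_upwards [self_mem_nhdsWithin] with ε hε
      exact half_pos (mem_Ioi.mp hε)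
  have hLeb : ∀ z ∈ 𝔹 n, ∀ᵐ t : ℝ, Tendsto
      (fun ε : ℝ => ⨍ τ in closedBall (t - ε/2) (ε/2), ‖F z τ - F z t‖)
      (𝓝[>] (0:ℝ)) (𝓝 0) := by
    intro z hz
    filter_upwards [IsUnifLocDoublingMeasure.ae_tendsto_average_norm_sub (μ := volume)
      (hFli z hz) 1] with t ht
    refine ht (fun ε => t - ε/2) (fun ε => ε/2) hδfun ?_
    filter_upwards [self_mem_nhdsWithin] with ε hε
    rw [mem_closedBall, Real.dist_eq, one_mul]
    rw [abs_of_nonneg (by linarith [le_of_lt (show (0:ℝ) < ε from hε)] : (0:ℝ) ≤ t - (t - ε/2)) ]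
    · linarith
  set D' : Set (En n) := D ∩ ball 0 1 with hD'
  have hD'c : D'.Countable := hDc.mono inter_subset_left
  have hLebAll : ∀ᵐ t : ℝ, ∀ z ∈ D', Tendsto
      (fun ε : ℝ => ⨍ τ in closedBall (t - ε/2) (ε/2), ‖F z τ - F z t‖)
      (𝓝[>] (0:ℝ)) (𝓝 0) :=
    (ae_ball_iff hD'c).2 (fun z hz => hLeb z hz.2)
  set S : Set ℝ := {t | ¬ ∀ z ∈ D', Tendsto
      (fun ε : ℝ => ⨍ τ in closedBall (t - ε/2) (ε/2), ‖F z τ - F z t‖)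
      (𝓝[>] (0:ℝ)) (𝓝 0)} with hS
  have hSvol : volume S = 0 := ae_iff.mp hLebAll
  refine ⟨N₀ ∪ (toMeasurable volume S ∩ Ici 0), ?_, ?_, ?_⟩
  · exact union_subset inter_subset_right inter_subset_right
  · refine measure_union_null hN₀vol ?_
    refine measure_mono_null inter_subset_left ?_
    rw [measure_toMeasurable]; exact hSvol
  intro t htpos htE
  have htN₀ : t ∉ N₀ := fun hc => htE (Or.inl hc)
  have htS : t ∉ S := by
    intro hc
    exact htE (Or.inr ⟨subset_toMeasurable _ _ hc, le_of_lt htpos⟩)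
  have hGt : G t ∈ ClassM n := hgood t (le_of_lt htpos) htN₀
  have hP : ∀ z ∈ D', Tendsto
      (fun ε : ℝ => ⨍ τ in closedBall (t - ε/2) (ε/2), ‖F z τ - F z t‖)
      (𝓝[>] (0:ℝ)) (𝓝 0) := not_not.mp (fun hc => htS hc)
  have hBopen : IsOpen (𝔹 n) := by rw [𝔹]; exact isOpen_ball
  rw [tendstoLocallyUniformlyOn_iff_forall_isCompact hBopen]
  intro K hK hKc
  obtain ⟨r, hr1, hr0, hKr⟩ : ∃ r : ℝ, r < 1 ∧ 0 ≤ r ∧ ∀ z ∈ K, ‖z‖ ≤ r := by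
    rcases K.eq_empty_or_nonempty with rfl | hne
    · exact ⟨0, by norm_num, le_rfl, by simp⟩
    · obtain ⟨z₀, hz₀K, hz₀max⟩ := hKc.exists_isMaxOn hne continuous_norm.continuousOn
      exact ⟨‖z₀‖, mem_ball_zero_iff.1 (hK hz₀K), norm_nonneg _, fun z hz => hz₀max hz⟩
  set s : ℝ := (1 + r) / 2 with hsdef
  have hs1 : s < 1 := by rw [hsdef]; linarith
  have hs0 : 0 ≤ s := by rw [hsdef]; linarith
  have hrs : r ≤ s := by rw [hsdef]; linarith
  set L : ℝ := 130 / (1 - s) ^ 3 with hLdef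
  have hL0 : 0 < L := by
    rw [hLdef]
    have : (0:ℝ) < 1 - s := by linarith
    positivity
  rw [Metric.tendstoUniformlyOn_iff]
  intro η hη
  set δ : ℝ := min ((1 - r) / 4) (η / (8 * L)) with hδdef
  have hδ0 : 0 < δ := lt_min (by linarith) (by positivity)
  have hδs : r + δ ≤ s := by
    have := min_le_left ((1 - r) / 4) (η / (8 * L))
    rw [hδdef, hsdef]
    have h2 := min_le_left ((1 - r) / 4) (η / (8 * L))
    calc r + min ((1 - r) / 4) (η / (8 * L)) ≤ r + (1 - r) / 4 := by linarith
      _ ≤ (1 + r) / 2 := by linarith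
  have hLδ : L * δ ≤ η / 8 := by
    have h2 : δ ≤ η / (8 * L) := min_le_right _ _
    calc L * δ ≤ L * (η / (8 * L)) := by gcongr
      _ = η / 8 := by field_simp
  -- finite net
  have hcover : K ⊆ ⋃ x ∈ K, ball x (δ / 2) := fun x hx =>
    mem_biUnion hx (mem_ball_self (by positivity))
  obtain ⟨T, hTK, hTfin, hKT⟩ :=
    hKc.elim_finite_subcover_image (fun x _ => isOpen_ball) hcover
  have hpick : ∀ x : En n, ∃ y ∈ D, dist x y < δ / 2 :=
    fun x => hDd.exists_dist_lt x (by positivity)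
  choose d hdD hddist using hpick
  have hdmem : ∀ x ∈ T, d x ∈ D' ∧ ‖d x‖ ≤ s := by
    intro x hxT
    have hxr : ‖x‖ ≤ r := hKr x (hTK hxT)
    have hdn : ‖d x‖ ≤ r + δ := by
      have h2 : ‖d x - x‖ < δ / 2 := by
        have := hddist x
        rwa [dist_eq_norm, norm_sub_rev] at this
      calc ‖d x‖ = ‖x + (d x - x)‖ := by congr 1; abel
        _ ≤ ‖x‖ + ‖d x - x‖ := norm_add_le _ _
        _ ≤ r + δ := by linarith
    have hds : ‖d x‖ ≤ s := hdn.trans hδs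
    refine ⟨⟨hdD x, ?_⟩, hds⟩
    rw [mem_ball_zero_iff]
    exact lt_of_le_of_lt hds hs1
  -- eventual bounds
  have hev1 : ∀ᶠ ε in 𝓝[>] (0:ℝ), ε ∈ Ioo (0:ℝ) t :=
    Ioo_mem_nhdsGT_of_mem ⟨le_rfl, htpos⟩
  have hev2 : ∀ᶠ ε in 𝓝[>] (0:ℝ), ∀ x ∈ T,
      ⨍ τ in closedBall (t - ε/2) (ε/2), ‖F (d x) τ - F (d x) t‖ < η / 4 := by
    rw [hTfin.eventually_all]
    intro x hxT
    have hdx := (hdmem x hxT).1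
    have := hP (d x) hdx
    exact this.eventually_lt_const (by positivity)
  filter_upwards [hev1, hev2] with ε hε hav
  obtain ⟨h0ε, hεt⟩ := hε
  have htε0 : 0 ≤ t - ε := by linarith
  have htε : t - ε ≤ t := by linarith
  -- interval integrability for points of the ball
  have hFII : ∀ ζ : En n, ζ ∈ 𝔹 n → IntervalIntegrable (F ζ) volume (t - ε) t := by
    intro ζ hζ
    rw [intervalIntegrable_iff_integrableOn_Ioc_of_le htε]
    refine Measure.integrableOn_of_bounded (M := 8 / (1 - ‖ζ‖) ^ 2) (measure_Ioc_lt_top).ne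
      (hFsm ζ hζ).aestronglyMeasurable ?_
    exact ae_restrict_of_ae (hFae ζ hζ)
  have hIeq : ∀ ζ : En n, EqOn (fun τ => G τ ζ) (F ζ) (uIcc (t - ε) t) := by
    intro ζ τ hτ
    rw [uIcc_of_le htε] at hτ
    have hτ0 : τ ∈ Ici (0:ℝ) := le_trans htε0 hτ.1
    rw [hFdef]
    simp only [indicator_of_mem hτ0]
  have hsubI : Set.uIoc (t - ε) t ⊆ uIcc (t - ε) t := by
    rw [uIoc_of_le htε, uIcc_of_le htε]
    exact Ioc_subset_Icc_self
  have hII : ∀ ζ : En n, ζ ∈ 𝔹 n → IntervalIntegrable (fun τ => G τ ζ) volume (t - ε) t := by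
    intro ζ hζ
    refine (hFII ζ hζ).congr ?_
    intro τ hτ
    exact (hIeq ζ (hsubI hτ)).symm
  intro z hzK
  have hz𝔹 : z ∈ 𝔹 n := hK hzK
  have hzr : ‖z‖ ≤ r := hKr z hzK
  obtain ⟨x, hxT, hzx⟩ := mem_iUnion₂.mp (hKT hzK)
  obtain ⟨hdx', hdxs⟩ := hdmem x hxT
  set w := d x with hwdef
  have hw𝔹 : w ∈ 𝔹 n := by rw [𝔹]; exact hdx'.2
  have hzw : ‖z - w‖ ≤ δ := by
    have h1 : dist z x < δ / 2 := mem_ball.mp hzx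
    have h2 : dist x w < δ / 2 := hddist x
    calc ‖z - w‖ = dist z w := (dist_eq_norm _ _).symm
      _ ≤ dist z x + dist x w := dist_triangle _ _ _
      _ ≤ δ := by linarith
  set Az : En n := (ε⁻¹ : ℝ) • ∫ τ in t - ε..t, G τ z with hAz
  set Aw : En n := (ε⁻¹ : ℝ) • ∫ τ in t - ε..t, G τ w with hAw
  have hterm1 : ‖Az - Aw‖ ≤ L * δ := by
    rw [hAz, hAw, ← smul_sub,
      ← intervalIntegral.integral_sub (hII z hz𝔹) (hII w hw𝔹),
      norm_smul, norm_inv, Real.norm_eq_abs, abs_of_pos h0ε]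
    have hb : ‖∫ τ in t - ε..t, (G τ z - G τ w)‖ ≤ L * δ * |t - (t - ε)| := by
      apply intervalIntegral.norm_integral_le_of_norm_le_const_ae
      filter_upwards [haeN] with τ hτN hτI
      rw [uIoc_of_le htε] at hτI
      have hτ0 : (0:ℝ) ≤ τ := le_trans htε0 hτI.1.le
      have hGτ := hgood τ hτ0 hτN
      calc ‖G τ z - G τ w‖ ≤ 130 / (1 - s) ^ 3 * ‖z - w‖ :=
            classM_lipschitz hGτ hs1 hs0 (hzr.trans hrs) hdxs
        _ = L * ‖z - w‖ := by rw [hLdef]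
        _ ≤ L * δ := mul_le_mul_of_nonneg_left hzw hL0.le
    have habs : |t - (t - ε)| = ε := by
      rw [show t - (t - ε) = ε by ring, abs_of_pos h0ε]
    rw [habs] at hb
    calc ε⁻¹ * ‖∫ τ in t - ε..t, (G τ z - G τ w)‖ ≤ ε⁻¹ * (L * δ * ε) := by
          exact mul_le_mul_of_nonneg_left hb (inv_nonneg.mpr h0ε.le)
      _ = L * δ := by field_simp
  have hterm3 : ‖G t z - G t w‖ ≤ L * δ := by
    calc ‖G t z - G t w‖ ≤ 130 / (1 - s) ^ 3 * ‖z - w‖ :=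
          classM_lipschitz hGt hs1 hs0 (hzr.trans hrs) hdxs
      _ = L * ‖z - w‖ := by rw [hLdef]
      _ ≤ L * δ := mul_le_mul_of_nonneg_left hzw hL0.le
  have hmid : ‖Aw - G t w‖ ≤ ⨍ τ in closedBall (t - ε/2) (ε/2), ‖F w τ - F w t‖ := by
    have hconst : (∫ _τ in t - ε..t, G t w) = ε • G t w := by
      rw [intervalIntegral.integral_const]
      congr 1
      ring
    have hsplit : Aw - G t w = (ε⁻¹ : ℝ) • ∫ τ in t - ε..t, (G τ w - G t w) := by
      rw [intervalIntegral.integral_sub (hII w hw𝔹) intervalIntegrable_const, hconst, hAw,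
        smul_sub, smul_smul, inv_mul_cancel₀ (ne_of_gt h0ε), one_smul]
    rw [hsplit, norm_smul, norm_inv, Real.norm_eq_abs, abs_of_pos h0ε]
    have hFn : IntervalIntegrable (fun τ => ‖F w τ - F w t‖) volume (t - ε) t :=
      ((hFII w hw𝔹).sub intervalIntegrable_const).norm
    have hb2 : ‖∫ τ in t - ε..t, (G τ w - G t w)‖ ≤ |∫ τ in t - ε..t, ‖F w τ - F w t‖| := by
      apply intervalIntegral.norm_integral_le_abs_of_norm_le ?_ hFn
      refine (ae_restrict_iff' measurableSet_uIoc).2 (Eventually.of_forall fun τ hτ => ?_)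
      have hτcc := hsubI hτ
      rw [uIcc_of_le htε] at hτcc
      have hτ0 : τ ∈ Ici (0:ℝ) := le_trans htε0 hτcc.1
      have e1 : F w τ = G τ w := by rw [hFdef]; simp only [indicator_of_mem hτ0]
      have e2 : F w t = G t w := by
        rw [hFdef]
        simp only [indicator_of_mem (show t ∈ Ici (0:ℝ) from le_of_lt htpos)]
      rw [e1, e2]
    have hnn : 0 ≤ ∫ τ in t - ε..t, ‖F w τ - F w t‖ :=
      intervalIntegral.integral_nonneg htε (fun u _ => norm_nonneg _)
    rw [abs_of_nonneg hnn] at hb2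
    have hIcc : closedBall (t - ε/2) (ε/2) = Icc (t - ε) t := by
      rw [Real.closedBall_eq_Icc]
      congr 1 <;> ring
    have havg : (⨍ τ in closedBall (t - ε/2) (ε/2), ‖F w τ - F w t‖)
        = ε⁻¹ * ∫ τ in t - ε..t, ‖F w τ - F w t‖ := by
      rw [hIcc, setAverage_eq, Real.volume_real_Icc_of_le htε,
        show t - (t - ε) = ε by ring,
        intervalIntegral.integral_of_le htε, ← integral_Icc_eq_integral_Ioc]
      simp [smul_eq_mul]
    rw [havg]
    exact mul_le_mul_of_nonneg_left hb2 (inv_nonneg.mpr h0ε.le)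
  have hmid2 : ‖Aw - G t w‖ < η / 4 := lt_of_le_of_lt hmid (hav x hxT)
  rw [dist_eq_norm]
  have htri : ‖G t z - Az‖ ≤ ‖G t z - G t w‖ + ‖Aw - G t w‖ + ‖Az - Aw‖ := by
    calc ‖G t z - Az‖ = dist (G t z) Az := (dist_eq_norm _ _).symm
      _ ≤ dist (G t z) (G t w) + dist (G t w) Aw + dist Aw Az := dist_triangle4 _ _ _ _
      _ = ‖G t z - G t w‖ + ‖Aw - G t w‖ + ‖Az - Aw‖ := by
          rw [dist_eq_norm, dist_eq_norm, dist_eq_norm, norm_sub_rev (G t w) Aw,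
            norm_sub_rev Aw Az]
  linarith [htri, hterm1, hterm3, hmid2, hLδ, hη]
end
end

section
/- Let G be a Herglotz vector field in the class ℳₙ, φ_t := φ^G_{0,t}, F := f^G. Then eᵗ h(φ_t(z)) → −F(z) as t → ∞, locally uniformly with respect to z ∈ 𝔹ⁿ and uniformly with respect to h ∈ ℳₙ. Moreover, for every r ∈ (0,1) there exists a constant M_r > 0 such that ‖h(z) + z‖ ≤ M_r‖z‖² for all z with ‖z‖ ≤ r and every h ∈ ℳₙ. -/
open Metric MeasureTheory Filter Topology Set

noncomputable section

lemma herglotz_bound {p : ℂ → ℂ} (hp : DifferentiableOn ℂ p (ball 0 1))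
    (h0 : p 0 = 1) (hre : ∀ ζ ∈ ball (0:ℂ) 1, 0 ≤ (p ζ).re) :
    ∀ ζ ∈ ball (0:ℂ) 1, ‖p ζ - 1‖ ≤ 2 * ‖ζ‖ / (1 - ‖ζ‖) := by
  have hne : ∀ ζ ∈ ball (0:ℂ) 1, p ζ + 1 ≠ 0 := by
    intro ζ hζ hc
    have h1 : (p ζ + 1).re = (p ζ).re + 1 := by simp
    have := hre ζ hζ
    rw [hc] at h1; simp at h1; linarith
  set w : ℂ → ℂ := fun ζ => (p ζ - 1) / (p ζ + 1) with hw
  have hwd : DifferentiableOn ℂ w (ball 0 1) :=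
    DifferentiableOn.div (hp.sub (differentiableOn_const 1))
      (hp.add (differentiableOn_const 1)) hne
  have hw0 : w 0 = 0 := by simp [hw, h0]
  have key : ∀ ζ ∈ ball (0:ℂ) 1, ‖p ζ - 1‖ ≤ ‖p ζ + 1‖ := by
    intro ζ hζ
    have h3 : ‖p ζ - 1‖^2 ≤ ‖p ζ + 1‖^2 := by
      have e1 : ‖p ζ - 1‖^2 = ((p ζ).re - 1)^2 + (p ζ).im^2 := by
        rw [Complex.sq_norm]
        simp [Complex.normSq_apply]; ring
      have e2 : ‖p ζ + 1‖^2 = ((p ζ).re + 1)^2 + (p ζ).im^2 := by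
        rw [Complex.sq_norm]
        simp [Complex.normSq_apply]; ring
      have := hre ζ hζ
      rw [e1, e2]; nlinarith
    nlinarith [norm_nonneg (p ζ - 1), norm_nonneg (p ζ + 1)]
  have hwle : ∀ ζ ∈ ball (0:ℂ) 1, ‖w ζ‖ ≤ 1 := by
    intro ζ hζ
    have hd := hne ζ hζ
    rw [hw]
    simp only
    rw [norm_div]
    rw [div_le_one (norm_pos_iff.mpr hd)]
    exact key ζ hζ
  -- Schwarz: ‖w ζ‖ ≤ ‖ζ‖
  have schwarz : ∀ ζ ∈ ball (0:ℂ) 1, ‖w ζ‖ ≤ ‖ζ‖ := by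
    intro ζ hζ
    refine le_of_forall_pos_le_add fun δ hδ => ?_
    have hmaps : MapsTo w (ball 0 1) (ball (w 0) (1 + δ)) := by
      intro x hx
      rw [hw0, mem_ball, dist_zero_right]
      exact lt_of_le_of_lt (hwle x hx) (by linarith)
    have := Complex.dist_le_div_mul_dist_of_mapsTo_ball hwd (hmaps.mono_right ball_subset_closedBall) hζ
    rw [hw0, dist_zero_right, dist_zero_right, div_one] at this
    calc ‖w ζ‖ ≤ (1 + δ) * ‖ζ‖ := this
      _ ≤ ‖ζ‖ + δ := by
          have : ‖ζ‖ < 1 := by simpa using hζ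
          nlinarith [norm_nonneg ζ]
  intro ζ hζ
  have hζ1 : ‖ζ‖ < 1 := by simpa using hζ
  have hd := hne ζ hζ
  have hids : p ζ - 1 = w ζ * (p ζ + 1) := by
    rw [hw]; field_simp
  have : ‖p ζ - 1‖ ≤ ‖ζ‖ * (‖p ζ - 1‖ + 2) := by
    calc ‖p ζ - 1‖ = ‖w ζ‖ * ‖p ζ + 1‖ := by rw [hids, norm_mul]
      _ ≤ ‖ζ‖ * ‖p ζ + 1‖ := by
          apply mul_le_mul_of_nonneg_right (schwarz ζ hζ) (norm_nonneg _)
      _ ≤ ‖ζ‖ * (‖p ζ - 1‖ + 2) := by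
          apply mul_le_mul_of_nonneg_left ?_ (norm_nonneg _)
          calc ‖p ζ + 1‖ = ‖(p ζ - 1) + 2‖ := by ring_nf
            _ ≤ ‖p ζ - 1‖ + ‖(2:ℂ)‖ := norm_add_le _ _
            _ = ‖p ζ - 1‖ + 2 := by norm_num
  rw [le_div_iff₀ (by linarith)]
  nlinarith [norm_nonneg (p ζ - 1)]


lemma conj_re_aux (a b : ℂ) : (a * (starRingEnd ℂ) (-a * b)).re = -(‖a‖^2 * b.re) := by
  have e : a * (starRingEnd ℂ) (-a * b) = -((Complex.normSq a : ℂ) * (starRingEnd ℂ) b) := by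
    rw [map_mul, map_neg, ← Complex.mul_conj]
    ring
  rw [e]
  simp [Complex.normSq_eq_norm_sq, ← Complex.ofReal_pow, Complex.mul_re]

lemma mem_B {n : ℕ} {z : En n} : z ∈ 𝔹 n ↔ ‖z‖ < 1 := by
  simp [𝔹, mem_ball, dist_zero_right]

-- differentiability of ζ ↦ inner ℂ a (h (z₀ + ζ • v)) on a disc
lemma slice_diff {n : ℕ} {h : En n → En n} (hd : DifferentiableOn ℂ h (𝔹 n))
    (a z₀ v : En n) {ρ : ℝ}
    (hmap : ∀ ζ : ℂ, ‖ζ‖ < ρ → z₀ + ζ • v ∈ 𝔹 n) :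
    DifferentiableOn ℂ (fun ζ : ℂ => (inner ℂ a (h (z₀ + ζ • v)) : ℂ)) (ball 0 ρ) := by
  intro ζ hζ
  have hζ' : ‖ζ‖ < ρ := by simpa [mem_ball, dist_zero_right] using hζ
  have hline : DifferentiableWithinAt ℂ (fun ζ : ℂ => z₀ + ζ • v) (ball 0 ρ) ζ :=
    (differentiableWithinAt_const z₀).add
      ((differentiableAt_fun_id.smul_const v).differentiableWithinAt)
  have hmaps : MapsTo (fun ζ : ℂ => z₀ + ζ • v) (ball 0 ρ) (𝔹 n) := by
    intro x hx
    exact hmap x (by simpa [mem_ball, dist_zero_right] using hx)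
  have hh : DifferentiableWithinAt ℂ (fun ζ : ℂ => h (z₀ + ζ • v)) (ball 0 ρ) ζ :=
    (hd _ (hmap ζ hζ')).comp ζ hline hmaps
  exact ((innerSL ℂ a).differentiableAt).comp_differentiableWithinAt ζ hh

lemma deriv_slice {n : ℕ} {h : En n → En n} (hh : h ∈ ClassM n) (a u : En n) :
    HasDerivAt (fun ζ : ℂ => (inner ℂ a (h (ζ • u)) : ℂ)) (-(inner ℂ a u : ℂ)) 0 := by
  have h0B : (0 : En n) ∈ 𝔹 n := by simp [mem_B]
  have hda : DifferentiableAt ℂ h 0 :=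
    (hh.1 0 h0B).differentiableAt ((Metric.isOpen_ball).mem_nhds h0B)
  have hF : HasFDerivAt h (-(1 : En n →L[ℂ] En n)) 0 := by
    have := hda.hasFDerivAt
    rwa [hh.2.2.1] at this
  have hline : HasDerivAt (fun ζ : ℂ => ζ • u) u 0 := by
    simpa using (hasDerivAt_id (0:ℂ)).smul_const u
  have hcomp : HasDerivAt (fun ζ : ℂ => h (ζ • u)) (-(1 : En n →L[ℂ] En n) u) 0 := by
    have h00 : (0:ℂ) • u = 0 := by simp
    have hF' : HasFDerivAt h (-(1 : En n →L[ℂ] En n)) ((0:ℂ) • u) := by rwa [h00]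
    simpa [Function.comp_def] using hF'.comp_hasDerivAt (0:ℂ) hline
  have := ((innerSL ℂ a).hasFDerivAt).comp_hasDerivAt (0:ℂ) hcomp
  simpa [Function.comp_def] using this

lemma slice_bound {n : ℕ} {h : En n → En n} (hh : h ∈ ClassM n) {u : En n}
    (hu : ‖u‖ = 1) {ζ : ℂ} (hζ : ‖ζ‖ < 1) :
    ‖(inner ℂ u (h (ζ • u)) : ℂ) + ζ‖ ≤ 2 * ‖ζ‖^2 / (1 - ‖ζ‖) := by
  set g : ℂ → ℂ := fun ζ => (inner ℂ u (h (ζ • u)) : ℂ) with hgdef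
  have hmap : ∀ ξ : ℂ, ‖ξ‖ < 1 → (0:En n) + ξ • u ∈ 𝔹 n := by
    intro ξ hξ
    simp only [zero_add, mem_B, norm_smul, hu, mul_one]
    exact hξ
  have hg : DifferentiableOn ℂ g (ball 0 1) := by
    have := slice_diff hh.1 u 0 u hmap
    simpa [hgdef] using this
  have hg0 : g 0 = 0 := by simp [hgdef, hh.2.1]
  have hg' : deriv g 0 = -1 := by
    have := deriv_slice hh u u
    have huu : (inner ℂ u u : ℂ) = 1 := by
      rw [inner_self_eq_norm_sq_to_K, hu]; norm_num
    rw [huu] at this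
    simpa [hgdef] using this.deriv
  set p : ℂ → ℂ := fun ξ => -(dslope g 0 ξ) with hpdef
  have hpd : DifferentiableOn ℂ p (ball 0 1) := by
    exact ((Complex.differentiableOn_dslope
      ((Metric.isOpen_ball).mem_nhds (by simp))).mpr hg).neg
  have hp0 : p 0 = 1 := by simp [hpdef, dslope_same, hg']
  have hgp : ∀ ξ : ℂ, g ξ = -ξ * p ξ := by
    intro ξ
    rcases eq_or_ne ξ 0 with rfl | hne
    · simp [hg0]
    · rw [hpdef]
      simp only [dslope_of_ne _ hne, slope_def_field, hg0, sub_zero]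
      field_simp
  have hpre : ∀ ξ ∈ ball (0:ℂ) 1, 0 ≤ (p ξ).re := by
    intro ξ hξ
    rcases eq_or_ne ξ 0 with rfl | hne
    · rw [hp0]; norm_num
    have hξ1 : ‖ξ‖ < 1 := by simpa [mem_ball, dist_zero_right] using hξ
    have hzb : ξ • u ∈ 𝔹 n := by simpa using hmap ξ hξ1
    have hle := hh.2.2.2 _ hzb
    have e : (inner ℂ (h (ξ • u)) (ξ • u) : ℂ) = ξ * (starRingEnd ℂ) (g ξ) := by
      rw [inner_smul_right]
      congr 1
      rw [hgdef]
      exact (inner_conj_symm _ _).symm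
    rw [e, hgp ξ] at hle
    rw [conj_re_aux ξ (p ξ)] at hle
    have hξpos : 0 < ‖ξ‖^2 := by
      have : ‖ξ‖ ≠ 0 := norm_ne_zero_iff.mpr hne
      positivity
    nlinarith
  have hbd := herglotz_bound hpd hp0 hpre ζ (by simpa [mem_ball, dist_zero_right] using hζ)
  have : (inner ℂ u (h (ζ • u)) : ℂ) + ζ = -ζ * (p ζ - 1) := by
    have e0 : (inner ℂ u (h (ζ • u)) : ℂ) = g ζ := rfl
    rw [e0, hgp]; ring
  rw [this, norm_mul, norm_neg]
  calc ‖ζ‖ * ‖p ζ - 1‖ ≤ ‖ζ‖ * (2 * ‖ζ‖ / (1 - ‖ζ‖)) :=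
        mul_le_mul_of_nonneg_left hbd (norm_nonneg _)
    _ = 2 * ‖ζ‖^2 / (1 - ‖ζ‖) := by ring

lemma radial_bound {n : ℕ} {h : En n → En n} (hh : h ∈ ClassM n) {z : En n}
    (hz : z ∈ 𝔹 n) :
    ‖(inner ℂ z (h z) : ℂ) + ((‖z‖:ℂ))^2‖ ≤ 2 * ‖z‖^3 / (1 - ‖z‖) := by
  rcases eq_or_ne z 0 with rfl | hne
  · simp [hh.2.1]
  · have hnz : (0:ℝ) < ‖z‖ := norm_pos_iff.mpr hne
    set u := ((‖z‖:ℂ))⁻¹ • z with hudef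
    have hcnz : ((‖z‖:ℝ):ℂ) ≠ 0 := by
      simpa using hnz.ne'
    have hu : ‖u‖ = 1 := by
      rw [hudef, norm_smul, norm_inv, Complex.norm_real]
      rw [Real.norm_eq_abs, abs_of_pos hnz]
      field_simp
    have hζu : ((‖z‖:ℝ):ℂ) • u = z := by
      rw [hudef, smul_smul, mul_inv_cancel₀ hcnz, one_smul]
    have hζn : ‖((‖z‖:ℝ):ℂ)‖ = ‖z‖ := by
      rw [Complex.norm_real, Real.norm_eq_abs, abs_of_pos hnz]
    have hb := slice_bound hh hu (ζ := ((‖z‖:ℝ):ℂ)) (by rw [hζn]; exact mem_B.mp hz)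
    rw [hζu] at hb
    have hinner : (inner ℂ u (h z) : ℂ) = ((‖z‖:ℝ):ℂ)⁻¹ * (inner ℂ z (h z) : ℂ) := by
      rw [hudef, inner_smul_left, map_inv₀, Complex.conj_ofReal]
    rw [hinner, hζn] at hb
    have hmul := mul_le_mul_of_nonneg_left hb (le_of_lt hnz)
    have e : ‖z‖ * ‖((‖z‖:ℝ):ℂ)⁻¹ * (inner ℂ z (h z) : ℂ) + ((‖z‖:ℝ):ℂ)‖
        = ‖(inner ℂ z (h z) : ℂ) + ((‖z‖:ℂ))^2‖ := by
      rw [← hζn, ← norm_mul]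
      congr 1
      simp only [hζn]
      field_simp
    rw [e] at hmul
    calc ‖(inner ℂ z (h z) : ℂ) + ((‖z‖:ℂ))^2‖ ≤ ‖z‖ * (2 * ‖z‖^2 / (1 - ‖z‖)) := hmul
      _ = 2 * ‖z‖^3 / (1 - ‖z‖) := by ring

lemma schwarz_quad {β : ℂ → ℂ} (hβ : DifferentiableOn ℂ β (ball 0 1))
    (h0 : β 0 = 0) (h1 : deriv β 0 = 0) {r' C : ℝ} (hr0 : 0 < r') (hr1 : r' < 1)
    (hC : ∀ ζ : ℂ, ‖ζ‖ ≤ r' → ‖β ζ‖ ≤ C) :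
    ∀ ζ : ℂ, ‖ζ‖ ≤ r' → ‖β ζ‖ ≤ C / r'^2 * ‖ζ‖^2 := by
  set q1 := dslope β 0 with hq1def
  set q2 := dslope q1 0 with hq2def
  have hmem : ball (0:ℂ) 1 ∈ 𝓝 (0:ℂ) := isOpen_ball.mem_nhds (by simp)
  have hq1 : DifferentiableOn ℂ q1 (ball 0 1) :=
    (Complex.differentiableOn_dslope hmem).mpr hβ
  have hq2 : DifferentiableOn ℂ q2 (ball 0 1) :=
    (Complex.differentiableOn_dslope hmem).mpr hq1
  have hfac : ∀ ζ : ℂ, β ζ = ζ^2 * q2 ζ := by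
    intro ζ
    rcases eq_or_ne ζ 0 with rfl | hne
    · simp [h0]
    · have e1 : q1 ζ = β ζ / ζ := by
        rw [hq1def, dslope_of_ne _ hne, slope_def_field, h0]; simp
      have hq10 : q1 0 = 0 := by rw [hq1def, dslope_same, h1]
      have e2 : q2 ζ = q1 ζ / ζ := by
        rw [hq2def, dslope_of_ne _ hne, slope_def_field, hq10]; simp
      rw [e2, e1]; field_simp
  have hcl : closure (ball (0:ℂ) r') = closedBall 0 r' := closure_ball 0 hr0.ne'
  have hbd : ∀ ζ ∈ closedBall (0:ℂ) r', ‖q2 ζ‖ ≤ C / r'^2 := by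
    intro ζ hζmem
    apply Complex.norm_le_of_forall_mem_frontier_norm_le isBounded_ball
      (DiffContOnCl.mk (hq2.mono (ball_subset_ball hr1.le))
        ((hq2.continuousOn).mono (by rw [hcl]; exact closedBall_subset_ball hr1)))
      ?_ (by rw [hcl]; exact hζmem)
    intro x hx
    rw [frontier_ball (0:ℂ) hr0.ne'] at hx
    have hxs : ‖x‖ = r' := by simpa [mem_sphere_iff_norm] using hx
    have hb := hC x (le_of_eq hxs)
    rw [hfac x, norm_mul, norm_pow, hxs] at hb
    rw [le_div_iff₀ (by positivity)]
    linarith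
  intro ζ hζ
  have : ζ ∈ closedBall (0:ℂ) r' := by simpa [mem_closedBall_iff_norm] using hζ
  rw [hfac ζ, norm_mul, norm_pow]
  calc ‖ζ‖^2 * ‖q2 ζ‖ ≤ ‖ζ‖^2 * (C / r'^2) :=
        mul_le_mul_of_nonneg_left (hbd ζ this) (by positivity)
    _ = C / r'^2 * ‖ζ‖^2 := by ring

lemma ortho_bound {n : ℕ} {h : En n → En n} (hh : h ∈ ClassM n)
    {z₀ v : En n} (hv : ‖v‖ = 1) (hvz : (inner ℂ v z₀ : ℂ) = 0)
    {ε σ : ℝ} (hε : 0 < ε) (hσ1 : σ < 1) (hσ0 : 0 ≤ σ)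
    (hσ : ‖z₀‖^2 + ε^2 ≤ σ^2) :
    ‖(inner ℂ v (h z₀) : ℂ)‖ ≤ 2 / (ε * (1 - σ)) := by
  have hzv : (inner ℂ z₀ v : ℂ) = 0 := by
    rw [← inner_conj_symm, hvz]; simp
  have hnorm : ∀ η : ℂ, ‖z₀ + η • v‖^2 = ‖z₀‖^2 + ‖η‖^2 := by
    intro η
    rw [@norm_add_sq ℂ _ _ _ _ z₀ (η • v), inner_smul_right, hzv]
    simp [norm_smul, hv]
  -- ε' with ε < ε' and ‖z₀‖² + ε'² < 1
  have hεσ : ‖z₀‖^2 + ε^2 < 1 := lt_of_le_of_lt hσ (by nlinarith)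
  set ε' : ℝ := Real.sqrt ((ε^2 + (1 - ‖z₀‖^2))/2) with hε'def
  have hε2 : ε^2 < 1 - ‖z₀‖^2 := by nlinarith [sq_nonneg ‖z₀‖]
  have hε'sq : ε'^2 = (ε^2 + (1 - ‖z₀‖^2))/2 := Real.sq_sqrt (by nlinarith)
  have hεε' : ε < ε' := by
    have h1 : ε^2 < ε'^2 := by rw [hε'sq]; nlinarith
    nlinarith [Real.sqrt_nonneg ((ε^2 + (1 - ‖z₀‖^2))/2)]
  have hε'1 : ‖z₀‖^2 + ε'^2 < 1 := by rw [hε'sq]; nlinarith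
  have hmap : ∀ η : ℂ, ‖η‖ < ε' → z₀ + η • v ∈ 𝔹 n := by
    intro η hη
    rw [mem_B]
    nlinarith [hnorm η, norm_nonneg (z₀ + η • v), norm_nonneg η, norm_nonneg z₀]
  set Ψ : ℂ → ℂ := fun η => η * ((inner ℂ z₀ (h (z₀ + η • v)) : ℂ)
      + ((‖z₀‖:ℝ):ℂ)^2 + ((ε:ℝ):ℂ)^2) + ((ε:ℝ):ℂ)^2 * (inner ℂ v (h (z₀ + η • v)) : ℂ)
    with hΨdef
  have hΨd : DifferentiableOn ℂ Ψ (ball 0 ε') := by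
    have d1 := slice_diff hh.1 z₀ z₀ v hmap
    have d2 := slice_diff hh.1 v z₀ v hmap
    exact ((differentiableOn_id.mul (((d1.add_const _).add_const _))).add
      (d2.const_mul _))
  have hcl : closure (ball (0:ℂ) ε) = closedBall 0 ε := closure_ball 0 hε.ne'
  have hfr : ∀ x ∈ frontier (ball (0:ℂ) ε), ‖Ψ x‖ ≤ ε * (2 / (1 - σ)) := by
    intro x hx
    rw [frontier_ball (0:ℂ) hε.ne'] at hx
    have hxs : ‖x‖ = ε := by simpa [mem_sphere_iff_norm] using hx
    set zx := z₀ + x • v with hzxdef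
    have hzxn : ‖zx‖^2 = ‖z₀‖^2 + ε^2 := by rw [hnorm x, hxs]
    have hzxσ : ‖zx‖ ≤ σ := by nlinarith [norm_nonneg zx]
    have hzxB : zx ∈ 𝔹 n := mem_B.mpr (lt_of_le_of_lt hzxσ hσ1)
    have hxx : x * (starRingEnd ℂ) x = ((ε:ℝ):ℂ)^2 := by
      rw [Complex.mul_conj]
      rw [Complex.normSq_eq_norm_sq, hxs]
      push_cast
      ring
    have hinner : (inner ℂ zx (h zx) : ℂ)
        = (inner ℂ z₀ (h zx) : ℂ) + (starRingEnd ℂ) x * (inner ℂ v (h zx) : ℂ) := by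
      rw [hzxdef, inner_add_left, inner_smul_left]
    have hzxc : ((‖zx‖:ℝ):ℂ)^2 = ((‖z₀‖:ℝ):ℂ)^2 + ((ε:ℝ):ℂ)^2 := by
      have h2 := congrArg (fun r : ℝ => (r:ℂ)) hzxn
      push_cast at h2
      exact h2
    have hΨx : Ψ x = x * ((inner ℂ zx (h zx) : ℂ) + ((‖zx‖:ℝ):ℂ)^2) := by
      rw [hΨdef]
      simp only
      rw [hinner, hzxc, ← hzxdef]
      ring_nf
      rw [← hxx]
      ring
    have hrb := radial_bound hh hzxB
    have hzx3 : 2 * ‖zx‖^3 / (1 - ‖zx‖) ≤ 2 / (1 - σ) := by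
      have hpow : ‖zx‖^3 ≤ 1 := pow_le_one₀ (norm_nonneg zx) (le_of_lt (lt_of_le_of_lt hzxσ hσ1))
      apply div_le_div₀ (by norm_num : (0:ℝ) ≤ 2) (by nlinarith) (by linarith) (by linarith)
    rw [hΨx, norm_mul, hxs]
    exact mul_le_mul_of_nonneg_left (le_trans hrb hzx3) hε.le
  have hmax := Complex.norm_le_of_forall_mem_frontier_norm_le isBounded_ball
    (DiffContOnCl.mk (hΨd.mono (ball_subset_ball hεε'.le))
      ((hΨd.continuousOn).mono (by rw [hcl]; exact closedBall_subset_ball hεε')))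
    hfr (by rw [hcl]; exact mem_closedBall_self hε.le)
  have hΨ0 : Ψ 0 = ((ε:ℝ):ℂ)^2 * (inner ℂ v (h z₀) : ℂ) := by
    rw [hΨdef]; simp
  rw [hΨ0, norm_mul] at hmax
  have hεn : ‖((ε:ℝ):ℂ)^2‖ = ε^2 := by
    rw [norm_pow, Complex.norm_real, Real.norm_eq_abs, abs_of_pos hε]
  rw [hεn] at hmax
  rw [le_div_iff₀ (mul_pos hε (by linarith))]
  calc ‖(inner ℂ v (h z₀) : ℂ)‖ * (ε * (1 - σ)) = (ε^2 * ‖(inner ℂ v (h z₀) : ℂ)‖) * ((1-σ)/ε) := by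
        field_simp
    _ ≤ (ε * (2/(1-σ))) * ((1-σ)/ε) := by
        apply mul_le_mul_of_nonneg_right hmax
        exact div_nonneg (by linarith) hε.le
    _ = 2 := by
        have h1 : (1:ℝ)-σ ≠ 0 := by linarith
        field_simp
        try ring

set_option maxHeartbeats 1000000 in
lemma classM_quad {n : ℕ} {r : ℝ} (hr0 : 0 < r) (hr1 : r < 1) :
    ∃ M : ℝ, 0 < M ∧ ∀ h ∈ ClassM n, ∀ z : En n, ‖z‖ ≤ r → ‖h z + z‖ ≤ M * ‖z‖ ^ 2 := by
  set a := 1 - r^2 with hadef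
  have ha0 : 0 < a := by nlinarith
  set ε := Real.sqrt (a/4) with hεdef
  have hε0 : 0 < ε := Real.sqrt_pos.mpr (by linarith)
  have hε2 : ε^2 = a/4 := Real.sq_sqrt (by linarith)
  set r' := Real.sqrt (r^2 + a/4) with hr'def
  have hr'2 : r'^2 = r^2 + a/4 := Real.sq_sqrt (by nlinarith)
  have hr'0 : 0 < r' := Real.sqrt_pos.mpr (by nlinarith)
  have hrr' : r ≤ r' := by nlinarith
  have hr'1 : r' < 1 := by nlinarith [Real.sqrt_nonneg (r^2 + a/4)]
  set σ := Real.sqrt (r^2 + a/2) with hσdef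
  have hσ2 : σ^2 = r^2 + a/2 := Real.sq_sqrt (by nlinarith)
  have hσ0 : 0 ≤ σ := Real.sqrt_nonneg _
  have hσ1 : σ < 1 := by nlinarith
  set C := 2 / (ε * (1 - σ)) with hCdef
  have hC0 : 0 < C := by
    apply div_pos (by norm_num) (mul_pos hε0 (by linarith))
  set M := 2/(1-r) + C/r'^2 with hMdef
  have hM : 0 < M := by
    have h1 : 0 < 2/(1-r) := div_pos (by norm_num) (by linarith)
    have h2 : 0 < C/r'^2 := div_pos hC0 (by positivity)
    rw [hMdef]
    exact add_pos h1 h2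
  refine ⟨M, hM, ?_⟩
  intro h hh z hzr
  rcases eq_or_ne z 0 with rfl | hne
  · simp [hh.2.1]
  have hzpos : 0 < ‖z‖ := norm_pos_iff.mpr hne
  have hz1 : ‖z‖ < 1 := lt_of_le_of_lt hzr hr1
  have hcz : ((‖z‖:ℝ):ℂ) ≠ 0 := by exact_mod_cast hzpos.ne'
  set u := ((‖z‖:ℝ):ℂ)⁻¹ • z with hudef
  have hu : ‖u‖ = 1 := by
    rw [hudef, norm_smul, norm_inv, Complex.norm_real, Real.norm_eq_abs, abs_of_pos hzpos]
    field_simp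
  have huu : (inner ℂ u u : ℂ) = 1 := by
    rw [inner_self_eq_norm_sq_to_K, hu]; norm_num
  have hζn : ‖((‖z‖:ℝ):ℂ)‖ = ‖z‖ := by
    rw [Complex.norm_real, Real.norm_eq_abs, abs_of_pos hzpos]
  have hzu : ((‖z‖:ℝ):ℂ) • u = z := by
    rw [hudef, smul_smul, mul_inv_cancel₀ hcz, one_smul]
  -- radial estimate
  have hα := slice_bound hh hu (ζ := ((‖z‖:ℝ):ℂ)) (by rw [hζn]; exact hz1)
  rw [hzu, hζn] at hα
  set w := h z + z with hwdef
  have hiuz : (inner ℂ u z : ℂ) = ((‖z‖:ℝ):ℂ) := by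
    rw [hudef, inner_smul_left, map_inv₀, Complex.conj_ofReal, inner_self_eq_norm_sq_to_K]
    field_simp
    norm_cast
  have hαe : (inner ℂ u w : ℂ) = (inner ℂ u (h z) : ℂ) + ((‖z‖:ℝ):ℂ) := by
    rw [hwdef, inner_add_right, hiuz]
  have hαb : ‖(inner ℂ u w : ℂ)‖ ≤ 2/(1-r) * ‖z‖^2 := by
    rw [hαe]
    refine le_trans hα ?_
    have h1 : (0:ℝ) < 1 - ‖z‖ := by linarith
    have h2 : (0:ℝ) < 1 - r := by linarith
    rw [div_le_iff₀ h1]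
    have h3 : 2/(1-r) * (1-r) = 2 := by field_simp
    have h5 : 0 ≤ 2/(1-r) := by positivity
    calc 2*‖z‖^2 = (2/(1-r)*(1-r)) * ‖z‖^2 := by rw [h3]
      _ ≤ (2/(1-r)*(1-‖z‖)) * ‖z‖^2 :=
          mul_le_mul_of_nonneg_right
            (mul_le_mul_of_nonneg_left (by linarith : 1-r ≤ 1-‖z‖) h5) (sq_nonneg ‖z‖)
      _ = 2/(1-r)*‖z‖^2*(1-‖z‖) := by ring
  set w1 := w - (inner ℂ u w : ℂ) • u with hw1def
  have hαu : ‖(inner ℂ u w : ℂ) • u‖ = ‖(inner ℂ u w : ℂ)‖ := by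
    rw [norm_smul, hu, mul_one]
  by_cases hw10 : w1 = 0
  · have hwe : w = (inner ℂ u w : ℂ) • u := sub_eq_zero.mp hw10
    have he2 : ‖h z + z‖ = ‖(inner ℂ u w : ℂ)‖ := by
      conv_lhs => rw [← hwdef, hwe]
      exact hαu
    rw [he2]
    calc ‖(inner ℂ u w : ℂ)‖ ≤ 2/(1-r) * ‖z‖^2 := hαb
      _ ≤ M * ‖z‖^2 := by
          apply mul_le_mul_of_nonneg_right ?_ (by positivity)
          rw [hMdef]
          have : 0 < C/r'^2 := div_pos hC0 (by positivity)
          linarith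
  · have hw1pos : 0 < ‖w1‖ := norm_pos_iff.mpr hw10
    have hcw1 : ((‖w1‖:ℝ):ℂ) ≠ 0 := by exact_mod_cast hw1pos.ne'
    set v := ((‖w1‖:ℝ):ℂ)⁻¹ • w1 with hvdef
    have hv : ‖v‖ = 1 := by
      rw [hvdef, norm_smul, norm_inv, Complex.norm_real, Real.norm_eq_abs, abs_of_pos hw1pos]
      field_simp
    have huw1 : (inner ℂ u w1 : ℂ) = 0 := by
      rw [hw1def, inner_sub_right, inner_smul_right, huu, mul_one, sub_self]
    have huv : (inner ℂ u v : ℂ) = 0 := by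
      rw [hvdef, inner_smul_right, huw1, mul_zero]
    have hvu : (inner ℂ v u : ℂ) = 0 := by
      rw [← inner_conj_symm, huv]; simp
    set β : ℂ → ℂ := fun ζ => (inner ℂ v (h (ζ • u)) : ℂ) with hβdef
    have hmapu : ∀ ζ : ℂ, ‖ζ‖ < 1 → (0:En n) + ζ • u ∈ 𝔹 n := by
      intro ξ hξ
      simp only [zero_add, mem_B, norm_smul, hu, mul_one]
      exact hξ
    have hβd : DifferentiableOn ℂ β (ball 0 1) := by
      have := slice_diff hh.1 v 0 u hmapu
      simpa [hβdef] using this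
    have hβ0 : β 0 = 0 := by simp [hβdef, hh.2.1]
    have hβ1 : deriv β 0 = 0 := by
      have := deriv_slice hh v u
      rw [hvu] at this
      simpa [hβdef] using this.deriv
    have hβC : ∀ ζ : ℂ, ‖ζ‖ ≤ r' → ‖β ζ‖ ≤ C := by
      intro ζ hζ
      rw [hβdef]
      apply ortho_bound hh hv ?_ hε0 hσ1 hσ0 ?_
      · rw [inner_smul_right, hvu, mul_zero]
      · have : ‖ζ • u‖ = ‖ζ‖ := by rw [norm_smul, hu, mul_one]
        rw [this]
        have hp := pow_le_pow_left₀ (norm_nonneg ζ) hζ 2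
        linarith
    have hq := schwarz_quad hβd hβ0 hβ1 hr'0 hr'1 hβC ((‖z‖:ℝ):ℂ)
      (by rw [hζn]; exact le_trans hzr hrr')
    rw [hζn] at hq
    have hqz : ‖(inner ℂ v (h z) : ℂ)‖ ≤ C/r'^2 * ‖z‖^2 := by
      have e : β ((‖z‖:ℝ):ℂ) = (inner ℂ v (h z) : ℂ) := by rw [hβdef]; simp only; rw [hzu]
      rwa [e] at hq
    -- inner ℂ v w = ‖w1‖
    have hvw1 : (inner ℂ v w1 : ℂ) = ((‖w1‖:ℝ):ℂ) := by
      rw [hvdef, inner_smul_left, map_inv₀, Complex.conj_ofReal, inner_self_eq_norm_sq_to_K]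
      field_simp
      norm_cast
    have hwsum : w = w1 + (inner ℂ u w : ℂ) • u := by rw [hw1def]; abel
    have hivz : (inner ℂ v z : ℂ) = 0 := by
      rw [← hzu, inner_smul_right, hvu, mul_zero]
    have hivw : (inner ℂ v w : ℂ) = (inner ℂ v (h z) : ℂ) := by
      rw [hwdef, inner_add_right, hivz, add_zero]
    have hivw2 : (inner ℂ v w : ℂ) = ((‖w1‖:ℝ):ℂ) := by
      rw [hwsum, inner_add_right, inner_smul_right, hvu, mul_zero, add_zero, hvw1]
    have hw1b : ‖w1‖ ≤ C/r'^2 * ‖z‖^2 := by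
      have : ‖((‖w1‖:ℝ):ℂ)‖ = ‖w1‖ := by
        rw [Complex.norm_real, Real.norm_eq_abs, abs_of_pos hw1pos]
      rw [← this, ← hivw2, hivw]
      exact hqz
    calc ‖h z + z‖ = ‖w1 + (inner ℂ u w : ℂ) • u‖ := by
          conv_lhs => rw [← hwdef, hwsum]
      _ ≤ ‖w1‖ + ‖(inner ℂ u w : ℂ) • u‖ := norm_add_le _ _
      _ = ‖w1‖ + ‖(inner ℂ u w : ℂ)‖ := by rw [hαu]
      _ ≤ C/r'^2 * ‖z‖^2 + 2/(1-r) * ‖z‖^2 := add_le_add hw1b hαb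
      _ = M * ‖z‖^2 := by rw [hMdef]; ring

/-- **Lemma: `eᵗ h(φ_t(z)) → −F(z)` locally uniformly in `z`, uniformly in `h ∈ ℳₙ`;
and the uniform quadratic bound `‖h(z)+z‖ ≤ M_r‖z‖²` on `‖z‖ ≤ r`.** -/
theorem exp_h_phi_tendsto_neg_F {n : ℕ} (G : ℝ → En n → En n)
    (φ : ℝ → ℝ → En n → En n) (F : En n → En n)
    (hG : IsHerglotz n G) (hφ : IsEvolution n G φ) (hF : IsLoewnerLimit n φ 0 F) :
    (∀ K : Set (En n), K ⊆ 𝔹 n → IsCompact K → ∀ δ : ℝ, 0 < δ →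
      ∀ᶠ t in (atTop : Filter ℝ), ∀ h ∈ ClassM n, ∀ z ∈ K,
        ‖Real.exp t • h (φ 0 t z) + F z‖ < δ) ∧
    (∀ r : ℝ, 0 < r → r < 1 → ∃ M : ℝ, 0 < M ∧
      ∀ h ∈ ClassM n, ∀ z : En n, ‖z‖ ≤ r → ‖h z + z‖ ≤ M * ‖z‖ ^ 2) := by
  have hFtlu : TendstoLocallyUniformlyOn
      (fun t : ℝ => fun z => Real.exp t • φ 0 t z) F atTop (𝔹 n) := hF
  constructor
  · intro K hK hKc δ hδ
    obtain ⟨M, hM0, hMb⟩ := classM_quad (n := n) (r := 1/2) (by norm_num) (by norm_num)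
    have hFu : TendstoUniformlyOn (fun t : ℝ => fun z => Real.exp t • φ 0 t z) F atTop K :=
      (tendstoLocallyUniformlyOn_iff_forall_isCompact Metric.isOpen_ball).mp hFtlu K hK hKc
    have hev : ∀ᶠ t in (atTop : Filter ℝ),
        ContinuousOn (fun z => Real.exp t • φ 0 t z) (𝔹 n) := by
      filter_upwards [eventually_ge_atTop (0:ℝ)] with t ht
      exact (((hφ 0 le_rfl).1 t ht).continuousOn).const_smul (Real.exp t)
    have hFc : ContinuousOn F (𝔹 n) := hFtlu.continuousOn hev.frequently
    obtain ⟨Cf, hCf⟩ := hKc.exists_bound_of_continuousOn (hFc.mono hK)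
    set C0 : ℝ := |Cf| + 1 with hC0def
    have hC0 : 0 < C0 := by positivity
    have hE2 : ∀ᶠ t in (atTop : Filter ℝ), ∀ z ∈ K,
        ‖Real.exp t • φ 0 t z - F z‖ < min (δ/2) 1 := by
      have := (Metric.tendstoUniformlyOn_iff.mp hFu) (min (δ/2) 1)
        (lt_min (by linarith) one_pos)
      filter_upwards [this] with t ht z hz
      have := ht z hz
      rwa [dist_comm, dist_eq_norm] at this
    have hE3 : ∀ᶠ t in (atTop : Filter ℝ),
        C0 * Real.exp (-t) < min (1/2) (δ/(2 * (M * C0 * C0) + 1)) := by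
      have hlim : Filter.Tendsto (fun t : ℝ => C0 * Real.exp (-t)) atTop (𝓝 0) := by
        simpa using (Real.tendsto_exp_neg_atTop_nhds_zero.const_mul C0)
      have hpos : (0:ℝ) < min (1/2) (δ/(2 * (M * C0 * C0) + 1)) := by
        apply lt_min (by norm_num)
        apply div_pos hδ
        nlinarith [mul_pos (mul_pos hM0 hC0) hC0]
      exact hlim.eventually (gt_mem_nhds hpos)
    filter_upwards [eventually_ge_atTop (0:ℝ), hE2, hE3] with t ht0 ht2 ht3 h hh z hz
    have hzB : z ∈ 𝔹 n := hK hz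
    set w := φ 0 t z with hwdef
    have hwB : w ∈ 𝔹 n := ((hφ 0 le_rfl).2 z hzB).1 t ht0
    have hexp : (0:ℝ) < Real.exp t := Real.exp_pos t
    have hnw : ‖Real.exp t • w - F z‖ < min (δ/2) 1 := ht2 z hz
    have hFb : ‖F z‖ ≤ |Cf| := le_trans (hCf z hz) (le_abs_self Cf)
    have hwb1 : Real.exp t * ‖w‖ ≤ C0 := by
      have h1 : ‖Real.exp t • w‖ ≤ ‖Real.exp t • w - F z‖ + ‖F z‖ := by
        have := norm_add_le (Real.exp t • w - F z) (F z)
        simpa using this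
      have h2 : ‖Real.exp t • w‖ = Real.exp t * ‖w‖ := by
        rw [norm_smul, Real.norm_eq_abs, abs_of_pos hexp]
      rw [h2] at h1
      have h3 : ‖Real.exp t • w - F z‖ ≤ 1 := le_of_lt (lt_of_lt_of_le hnw (min_le_right _ _))
      rw [hC0def]
      linarith
    have hwsmall : ‖w‖ ≤ C0 * Real.exp (-t) := by
      have h4 := mul_le_mul_of_nonneg_left hwb1 (Real.exp_pos (-t)).le
      rw [← mul_assoc, ← Real.exp_add] at h4
      simpa [mul_comm] using h4
    have hwhalf : ‖w‖ ≤ 1/2 :=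
      le_trans hwsmall (le_of_lt (lt_of_lt_of_le ht3 (min_le_left _ _)))
    have hq := hMb h hh w hwhalf
    have key : Real.exp t • h w + F z
        = Real.exp t • (h w + w) - (Real.exp t • w - F z) := by
      rw [smul_add]; abel
    rw [key]
    have hb1 : ‖Real.exp t • (h w + w)‖ ≤ Real.exp t * (M * ‖w‖^2) := by
      rw [norm_smul, Real.norm_eq_abs, abs_of_pos hexp]
      exact mul_le_mul_of_nonneg_left hq hexp.le
    have hb2 : Real.exp t * (M * ‖w‖^2) ≤ M * C0 * (C0 * Real.exp (-t)) := by
      have e1 : Real.exp t * (M * ‖w‖^2) = (M * (Real.exp t * ‖w‖)) * ‖w‖ := by ring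
      rw [e1]
      exact mul_le_mul (mul_le_mul_of_nonneg_left hwb1 hM0.le) hwsmall
        (norm_nonneg w) (by positivity)
    have hb3 : M * C0 * (C0 * Real.exp (-t)) < δ/2 := by
      have h5 := lt_of_lt_of_le ht3 (min_le_right _ _)
      have h6 : (0:ℝ) < 2*(M*C0*C0)+1 := by positivity
      have h5' := (lt_div_iff₀ h6).mp h5
      have hC1 : (1:ℝ) ≤ C0 := by rw [hC0def]; linarith [abs_nonneg Cf]
      have hA : (0:ℝ) < C0 * Real.exp (-t) := by positivity
      rw [lt_div_iff₀ (by norm_num : (0:ℝ) < 2)]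
      nlinarith [mul_nonneg (by positivity : (0:ℝ) ≤ 2*M*C0*(C0*Real.exp (-t)))
        (by linarith : (0:ℝ) ≤ C0 - 1)]
    calc ‖Real.exp t • (h w + w) - (Real.exp t • w - F z)‖
        ≤ ‖Real.exp t • (h w + w)‖ + ‖Real.exp t • w - F z‖ := norm_sub_le _ _
      _ < δ/2 + δ/2 := by
          have h7 := lt_of_lt_of_le hnw (min_le_left _ _)
          exact add_lt_add (lt_of_le_of_lt (le_trans hb1 hb2) hb3) h7
      _ = δ := by ring
  · intro r hr0 hr1
    exact classM_quad hr0 hr1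
end
end
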